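/- arXiv:2005.11674 — 2 statements merged into one kernel-verified Lean document; each statement's English description precedes it below -/
import Mathlib

section
/- Suppose −1 is a nonsquare in F_q. Then S_{00}^{00} = S_{00}^{11} = ∅. Moreover, for (x,y) ∈ S: (x,y) ∈ S_{01}^{10} if and only if (x,y) ∈ S_{10}^{01}, if and only if (1−y)(x−y) and (1−x)(y−x) are squares; and (x,y) ∈ S_{01}^{00} if and only if (x−1)(y−x) and (x² − 2x + y)(y−x) are squares. -/
open scoped Classical

noncomputable section

/-- The operation of the quasigroup `Q_{a,b}`:
`u*v = u + a(v-u)` if `v-u` is a square, `u*v = u + b(v-u)` otherwise. -/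
def qop {F : Type*} [Field F] (a b u v : F) : F :=
  if IsSquare (v - u) then u + a * (v - u) else u + b * (v - u)

/-- The set `Σ(F)` of pairs `(a,b)` with `a ≠ b`, `a,b ∉ {0,1}`, and
`ab` and `(1-a)(1-b)` both squares. -/
def SigSet (F : Type*) [Field F] : Set (F × F) :=
  {p | p.1 ≠ p.2 ∧ p.1 ≠ 0 ∧ p.1 ≠ 1 ∧ p.2 ≠ 0 ∧ p.2 ≠ 1 ∧
    IsSquare (p.1 * p.2) ∧ IsSquare ((1 - p.1) * (1 - p.2))}

/-- `Q_{a,b}` is maximally nonassociative. -/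
def MaxNA {F : Type*} [Field F] (a b : F) : Prop :=
  ∀ u v w : F, qop a b (qop a b u v) w = qop a b u (qop a b v w) → u = v ∧ v = w

/-- `σ(q)`: the number of pairs `(a,b) ∈ Σ` for which `Q_{a,b}` is
maximally nonassociative. -/
def sigmaCount (F : Type*) [Field F] : ℕ :=
  Set.ncard {p : F × F | p ∈ SigSet F ∧ MaxNA p.1 p.2}

/-- The quadratic orthomorphism `ψ_{a,b}`. -/
def psiOrtho {F : Type*} [Field F] (a b u : F) : F :=
  if IsSquare u then a * u else b * u

/-- The Associativity Equation `ψ(ψ(u)-v) = ψ(-v) + ψ(u-v-ψ(-v))`. -/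
def AssocEq {F : Type*} [Field F] (a b u v : F) : Prop :=
  psiOrtho a b (psiOrtho a b u - v) =
    psiOrtho a b (-v) + psiOrtho a b (u - v - psiOrtho a b (-v))

/-- The set `S(F)` of pairs `(x,y)` of squares with `x ≠ y`, `x,y ∉ {0,1}`. -/
def SPairs (F : Type*) [Field F] : Set (F × F) :=
  {p | IsSquare p.1 ∧ IsSquare p.2 ∧ p.1 ≠ p.2 ∧ p.1 ≠ 0 ∧ p.1 ≠ 1 ∧ p.2 ≠ 0 ∧ p.2 ≠ 1}

/-- The map `Ψ : Σ → S`, `(a,b) ↦ (a/b, (1-a)/(1-b))`. -/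
def PsiMap {F : Type*} [Field F] (p : F × F) : F × F :=
  (p.1 / p.2, (1 - p.1) / (1 - p.2))

/-- The set `E(a,b)` of nonzero solutions of the Associativity Equation. -/
def ESet {F : Type*} [Field F] (a b : F) : Set (F × F) :=
  {p | p ≠ (0, 0) ∧ AssocEq a b p.1 p.2}

/-- The set `E_{ij}^{rs}(a,b)`. -/
def ESub {F : Type*} [Field F] (a b : F) (i j r s : Fin 2) : Set (F × F) :=
  {p | p ∈ ESet a b ∧ (IsSquare p.1 ↔ i = 0) ∧ (IsSquare (-p.2) ↔ j = 0) ∧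
    (IsSquare (psiOrtho a b p.1 - p.2) ↔ r = 0) ∧
    (IsSquare (p.1 - p.2 - psiOrtho a b (-p.2)) ↔ s = 0)}

/-- The set `Σ_{ij}^{rs} = {(a,b) ∈ Σ : E_{ij}^{rs}(a,b) ≠ ∅}`. -/
def SigSub (F : Type*) [Field F] (i j r s : Fin 2) : Set (F × F) :=
  {p | p ∈ SigSet F ∧ (ESub p.1 p.2 i j r s).Nonempty}

/-- The set `S_{ij}^{rs} = Ψ(Σ_{ij}^{rs})`. -/
def SSub (F : Type*) [Field F] (i j r s : Fin 2) : Set (F × F) :=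
  PsiMap '' (SigSub F i j r s)


section Helpers
variable {F : Type*} [Field F] [Fintype F]
set_option linter.unusedSectionVars false

lemma sq_mul_iff' {a b : F} (ha : a ≠ 0) (hb : b ≠ 0) :
    IsSquare (a * b) ↔ (IsSquare a ↔ IsSquare b) := by
  rw [← quadraticChar_one_iff_isSquare ha, ← quadraticChar_one_iff_isSquare hb,
    ← quadraticChar_one_iff_isSquare (mul_ne_zero ha hb), map_mul]
  rcases quadraticChar_dichotomy ha with h | h <;>
    rcases quadraticChar_dichotomy hb with h' | h' <;> rw [h, h'] <;> norm_num

lemma sq_sq_mul_iff' {w : F} (hw : w ≠ 0) (z : F) : IsSquare (w ^ 2 * z) ↔ IsSquare z := by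
  constructor
  · rintro ⟨d, hd⟩
    exact ⟨d / w, by field_simp; linear_combination hd⟩
  · rintro ⟨d, hd⟩
    exact ⟨w * d, by rw [hd]; ring⟩

lemma sq_div_iff' {w : F} (hw : w ≠ 0) (z : F) : IsSquare (z / w) ↔ IsSquare (z * w) := by
  have h : z / w = (w⁻¹) ^ 2 * (z * w) := by field_simp
  rw [h, sq_sq_mul_iff' (inv_ne_zero hw)]

lemma neg_sq_iff' (hns : ¬ IsSquare (-1 : F)) {z : F} (hz : z ≠ 0) :
    IsSquare (-z) ↔ ¬ IsSquare z := by
  have h := sq_mul_iff' (neg_ne_zero.mpr (one_ne_zero : (1:F) ≠ 0)) hz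
  rw [neg_one_mul] at h
  rw [h]; tauto

lemma psi_sq {a b u : F} (h : IsSquare u) : psiOrtho a b u = a * u := if_pos h
lemma psi_ns {a b u : F} (h : ¬ IsSquare u) : psiOrtho a b u = b * u := if_neg h

lemma E1_empty (hns : ¬ IsSquare (-1 : F)) {a b : F} (hab : (a, b) ∈ SigSet F) :
    ESub a b 0 0 0 0 = ∅ := by
  obtain ⟨-, ha0, ha1, -, -, -, -⟩ := hab
  simp only at ha0 ha1
  rw [Set.eq_empty_iff_forall_notMem]
  rintro ⟨u, v⟩ ⟨⟨hne, hEq⟩, hi, hj, hr, hs⟩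
  unfold AssocEq at hEq
  simp only at hi hj hr hs hEq
  have hu : IsSquare u := hi.mpr trivial
  have hjv : IsSquare (-v) := hj.mpr trivial
  rw [psi_sq hu] at hEq hr
  rw [psi_sq hjv] at hEq hs
  rw [psi_sq (hr.mpr trivial), psi_sq (hs.mpr trivial)] at hEq
  have h0 : a * (a - 1) * (u - v) = 0 := by linear_combination hEq
  have huv : u = v := by
    rcases mul_eq_zero.mp h0 with h | h
    · rcases mul_eq_zero.mp h with h | h
      · exact absurd h ha0
      · exact absurd (by linear_combination h : a = 1) ha1
    · exact sub_eq_zero.mp h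
  subst huv
  have hu0 : u ≠ 0 := fun h => hne (by simp [h])
  exact (neg_sq_iff' hns hu0).mp hjv hu

lemma E2_empty (hns : ¬ IsSquare (-1 : F)) {a b : F} (hab : (a, b) ∈ SigSet F) :
    ESub a b 0 0 1 1 = ∅ := by
  obtain ⟨-, ha0, ha1, hb0, hb1, habsq, hab1sq⟩ := hab
  simp only at ha0 ha1 hb0 hb1 habsq hab1sq
  rw [Set.eq_empty_iff_forall_notMem]
  rintro ⟨u, v⟩ ⟨⟨hne, hEq⟩, hi, hj, hr, hs⟩
  unfold AssocEq at hEq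
  simp only at hi hj hr hs hEq
  have hu : IsSquare u := hi.mpr trivial
  have hjv : IsSquare (-v) := hj.mpr trivial
  rw [psi_sq hu] at hEq hr
  rw [psi_sq hjv] at hEq hs
  have hr' : ¬ IsSquare (a * u - v) := fun h => by simpa using hr.mp h
  have hs' : ¬ IsSquare (u - v - a * -v) := fun h => by simpa using hs.mp h
  rw [psi_ns hr', psi_ns hs'] at hEq
  have hrel : b * (a - 1) * u = a * (b - 1) * v := by linear_combination hEq
  have hb1' : b - 1 ≠ 0 := sub_ne_zero.mpr hb1
  have ha1' : a - 1 ≠ 0 := sub_ne_zero.mpr ha1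
  have hv0 : v ≠ 0 := by
    rintro rfl
    have hu0 : u = 0 := by
      rcases mul_eq_zero.mp (by linear_combination hrel : b * (a - 1) * u = 0) with h | h
      · exact absurd h (mul_ne_zero hb0 ha1')
      · exact h
    exact hne (by simp [hu0])
  have hvns : ¬ IsSquare v := (neg_sq_iff' hns hv0).mp hjv
  have hu0 : u ≠ 0 := by
    rintro rfl
    have : v = 0 := by
      rcases mul_eq_zero.mp (by linear_combination -hrel : a * (b - 1) * v = 0) with h | h
      · exact absurd h (mul_ne_zero ha0 hb1')
      · exact h
    exact hv0 this
  obtain ⟨w, hw⟩ := hu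
  have hw0 : w ≠ 0 := by rintro rfl; exact hu0 (by simp [hw])
  have key : (a * (b - 1)) ^ 2 * v = a * b * ((1 - a) * (1 - b)) * (w * w) := by
    rw [hw] at hrel
    linear_combination (-(a * (b - 1))) * hrel
  have hvsq : IsSquare v := by
    refine (sq_sq_mul_iff' (mul_ne_zero ha0 hb1') v).mp ?_
    rw [key]
    exact (habsq.mul hab1sq).mul ⟨w, rfl⟩
  exact hvns hvsq

lemma E3_iff (hns : ¬ IsSquare (-1 : F)) {a b : F} (hab : (a, b) ∈ SigSet F) :
    (ESub a b 0 1 1 0).Nonempty ↔ ¬ IsSquare (a - 1) ∧ IsSquare b := by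
  obtain ⟨-, ha0, ha1, hb0, hb1, habsq, hab1sq⟩ := hab
  simp only at ha0 ha1 hb0 hb1 habsq hab1sq
  constructor
  · rintro ⟨⟨u, v⟩, ⟨hne, hEq⟩, hi, hj, hr, hs⟩
    unfold AssocEq at hEq
    simp only at hi hj hr hs hEq
    have hu : IsSquare u := hi.mpr trivial
    have hjv : ¬ IsSquare (-v) := fun h => by simpa using hj.mp h
    rw [psi_sq hu] at hEq hr
    rw [psi_ns hjv] at hEq hs
    have hr' : ¬ IsSquare (a * u - v) := fun h => by simpa using hr.mp h
    have hs' : IsSquare (u - v - b * -v) := hs.mpr trivial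
    rw [psi_ns hr', psi_sq hs'] at hEq
    have huv : u = v := by
      have h0 : a * (b - 1) * (u - v) = 0 := by linear_combination hEq
      rcases mul_eq_zero.mp h0 with h | h
      · rcases mul_eq_zero.mp h with h | h
        · exact absurd h ha0
        · exact absurd (by linear_combination h : b = 1) hb1
      · exact sub_eq_zero.mp h
    subst huv
    have hu0 : u ≠ 0 := by rintro rfl; exact hjv (by simp)
    obtain ⟨w, hw⟩ := hu
    have hw0 : w ≠ 0 := by rintro rfl; exact hu0 (by simp [hw])
    constructor
    · intro hA
      apply hr'
      have e : a * u - u = w ^ 2 * (a - 1) := by rw [hw]; ring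
      rw [e]
      exact (sq_sq_mul_iff' hw0 _).mpr hA
    · have e : u - u - b * -u = w ^ 2 * b := by rw [hw]; ring
      rw [e] at hs'
      exact (sq_sq_mul_iff' hw0 _).mp hs'
  · rintro ⟨hA, hB⟩
    refine ⟨(1, 1), ⟨⟨by simp, ?_⟩, ?_, ?_, ?_, ?_⟩⟩
    · show AssocEq a b 1 1
      unfold AssocEq
      rw [psi_ns hns, psi_sq (IsSquare.one : IsSquare (1:F))]
      have e1 : a * 1 - 1 = a - 1 := by ring
      have e2 : (1 : F) - 1 - b * -1 = b := by ring
      rw [e1, e2, psi_ns hA, psi_sq hB]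
      ring
    · exact iff_of_true IsSquare.one rfl
    · exact iff_of_false hns (by decide)
    · show IsSquare (psiOrtho a b 1 - 1) ↔ (1 : Fin 2) = 0
      rw [psi_sq (IsSquare.one : IsSquare (1:F))]
      have e1 : a * 1 - 1 = a - 1 := by ring
      rw [e1]
      exact iff_of_false hA (by decide)
    · show IsSquare (1 - 1 - psiOrtho a b (-1)) ↔ (0 : Fin 2) = 0
      rw [psi_ns hns]
      have e2 : (1 : F) - 1 - b * -1 = b := by ring
      rw [e2]
      exact iff_of_true hB rfl

lemma E4_iff (hns : ¬ IsSquare (-1 : F)) {a b : F} (hab : (a, b) ∈ SigSet F) :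
    (ESub a b 1 0 0 1).Nonempty ↔ ¬ IsSquare (b - 1) ∧ IsSquare a := by
  obtain ⟨-, ha0, ha1, hb0, hb1, habsq, hab1sq⟩ := hab
  simp only at ha0 ha1 hb0 hb1 habsq hab1sq
  have hb1' : b - 1 ≠ 0 := sub_ne_zero.mpr hb1
  constructor
  · rintro ⟨⟨u, v⟩, ⟨hne, hEq⟩, hi, hj, hr, hs⟩
    unfold AssocEq at hEq
    simp only at hi hj hr hs hEq
    have hu : ¬ IsSquare u := fun h => by simpa using hi.mp h
    have hjv : IsSquare (-v) := hj.mpr trivial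
    rw [psi_ns hu] at hEq hr
    rw [psi_sq hjv] at hEq hs
    have hr' : IsSquare (b * u - v) := hr.mpr trivial
    have hs' : ¬ IsSquare (u - v - a * -v) := fun h => by simpa using hs.mp h
    rw [psi_sq hr', psi_ns hs'] at hEq
    have huv : u = v := by
      have h0 : b * (a - 1) * (u - v) = 0 := by linear_combination hEq
      rcases mul_eq_zero.mp h0 with h | h
      · rcases mul_eq_zero.mp h with h | h
        · exact absurd h hb0
        · exact absurd (by linear_combination h : a = 1) ha1
      · exact sub_eq_zero.mp h
    subst huv
    have hu0 : u ≠ 0 := by rintro rfl; exact hu (by simp)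
    constructor
    · intro hB1
      have e : b * u - u = (b - 1) * u := by ring
      rw [e] at hr'
      have := (sq_mul_iff' hb1' hu0).mp hr'
      exact hu (this.mp hB1)
    · have e : u - u - a * -u = a * u := by ring
      rw [e] at hs'
      by_contra hA
      have : ¬ (IsSquare a ↔ IsSquare u) := fun h => hs' ((sq_mul_iff' ha0 hu0).mpr h)
      tauto
  · rintro ⟨hB1, hA⟩
    have hsqb1 : IsSquare (-(b - 1)) := (neg_sq_iff' hns hb1').mpr hB1
    have hnsa : ¬ IsSquare (-a) := fun h => ((neg_sq_iff' hns ha0).mp h) hA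
    refine ⟨(-1, -1), ⟨⟨by simp, ?_⟩, ?_, ?_, ?_, ?_⟩⟩
    · show AssocEq a b (-1) (-1)
      unfold AssocEq
      rw [neg_neg, psi_ns hns, psi_sq (IsSquare.one : IsSquare (1:F))]
      have e1 : b * -1 - -1 = -(b - 1) := by ring
      have e2 : (-1 : F) - -1 - a * 1 = -a := by ring
      rw [e1, e2, psi_sq hsqb1, psi_ns hnsa]
      ring
    · exact iff_of_false hns (by decide)
    · show IsSquare (-(-1) : F) ↔ (0 : Fin 2) = 0
      rw [neg_neg]
      exact iff_of_true IsSquare.one rfl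
    · show IsSquare (psiOrtho a b (-1) - (-1)) ↔ (0 : Fin 2) = 0
      rw [psi_ns hns]
      have e1 : b * -1 - -1 = -(b - 1) := by ring
      rw [e1]
      exact iff_of_true hsqb1 rfl
    · show IsSquare (-1 - -1 - psiOrtho a b (-(-1))) ↔ (1 : Fin 2) = 0
      rw [neg_neg, psi_sq (IsSquare.one : IsSquare (1:F))]
      have e2 : (-1 : F) - -1 - a * 1 = -a := by ring
      rw [e2]
      exact iff_of_false hnsa (by decide)

lemma E5_iff (hns : ¬ IsSquare (-1 : F)) {a b : F} (hab : (a, b) ∈ SigSet F) :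
    (ESub a b 0 1 0 0).Nonempty ↔ IsSquare (b - 1) ∧ IsSquare (a * (a * b + b - a)) := by
  obtain ⟨-, ha0, ha1, hb0, hb1, habsq, hab1sq⟩ := hab
  simp only at ha0 ha1 hb0 hb1 habsq hab1sq
  constructor
  · rintro ⟨⟨u, v⟩, ⟨hne, hEq⟩, hi, hj, hr, hs⟩
    unfold AssocEq at hEq
    simp only at hi hj hr hs hEq
    have hu : IsSquare u := hi.mpr trivial
    have hjv : ¬ IsSquare (-v) := fun h => by simpa using hj.mp h
    rw [psi_sq hu] at hEq hr
    rw [psi_ns hjv] at hEq hs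
    have hr' : IsSquare (a * u - v) := hr.mpr trivial
    have hs' : IsSquare (u - v - b * -v) := hs.mpr trivial
    rw [psi_sq hr', psi_sq hs'] at hEq
    have hrel : a * u = b * v := by
      have h0 : (a - 1) * (a * u - b * v) = 0 := by linear_combination hEq
      rcases mul_eq_zero.mp h0 with h | h
      · exact absurd (by linear_combination h : a = 1) ha1
      · linear_combination h
    have hv0 : v ≠ 0 := by rintro rfl; exact hjv (by simp)
    have hvsq : IsSquare v := by
      by_contra h
      exact hjv ((neg_sq_iff' hns hv0).mpr h)
    obtain ⟨w, hw⟩ := hvsq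
    have hw0 : w ≠ 0 := by rintro rfl; exact hv0 (by simp [hw])
    have hu' : u = b * v / a := by field_simp; linear_combination hrel
    rw [hu', hw] at hr' hs'
    constructor
    · have e : a * (b * (w * w) / a) - w * w = w ^ 2 * (b - 1) := by
        field_simp
      rw [e] at hr'
      exact (sq_sq_mul_iff' hw0 _).mp hr'
    · have e : b * (w * w) / a - w * w - b * -(w * w) = (w / a) ^ 2 * (a * (a * b + b - a)) := by
        field_simp; ring
      rw [e] at hs'
      exact (sq_sq_mul_iff' (div_ne_zero hw0 ha0) _).mp hs'
  · rintro ⟨hB1, hB2⟩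
    have hu : IsSquare (b / a) := (sq_div_iff' ha0 b).mpr (by rwa [mul_comm] at habsq)
    have hs2 : IsSquare (b / a - 1 - b * -1) := by
      have e : b / a - 1 - b * -1 = (a⁻¹) ^ 2 * (a * (a * b + b - a)) := by
        field_simp; ring
      rw [e]
      exact (sq_sq_mul_iff' (inv_ne_zero ha0) _).mpr hB2
    have hr2 : IsSquare (a * (b / a) - 1) := by
      have e : a * (b / a) - 1 = b - 1 := by field_simp
      rw [e]; exact hB1
    refine ⟨(b / a, 1), ⟨⟨by simp, ?_⟩, ?_, ?_, ?_, ?_⟩⟩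
    · show AssocEq a b (b / a) 1
      unfold AssocEq
      rw [psi_sq hu, psi_ns hns, psi_sq hr2, psi_sq hs2]
      field_simp
      ring
    · exact iff_of_true hu rfl
    · exact iff_of_false hns (by decide)
    · show IsSquare (psiOrtho a b (b / a) - 1) ↔ (0 : Fin 2) = 0
      rw [psi_sq hu]
      exact iff_of_true hr2 rfl
    · show IsSquare (b / a - 1 - psiOrtho a b (-1)) ↔ (0 : Fin 2) = 0
      rw [psi_ns hns]
      exact iff_of_true hs2 rfl

lemma pre_mem {x y : F} (h : (x, y) ∈ SPairs F) :
    (x * ((y - 1) / (y - x)), (y - 1) / (y - x)) ∈ SigSet F ∧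
      PsiMap (x * ((y - 1) / (y - x)), (y - 1) / (y - x)) = (x, y) := by
  obtain ⟨hxs, hys, hxy, hx0, hx1, hy0, hy1⟩ := h
  simp only at hxs hys hxy hx0 hx1 hy0 hy1
  have hyx : y - x ≠ 0 := sub_ne_zero.mpr (Ne.symm hxy)
  have hy1' : y - 1 ≠ 0 := sub_ne_zero.mpr hy1
  have hb0 : (y - 1) / (y - x) ≠ 0 := div_ne_zero hy1' hyx
  have hb1 : (y - 1) / (y - x) ≠ 1 := by
    intro hh
    rw [div_eq_one_iff_eq hyx] at hh
    exact hx1 (by linear_combination hh)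
  have h1b : 1 - (y - 1) / (y - x) ≠ 0 := sub_ne_zero.mpr (fun hh => hb1 hh.symm)
  have ha0 : x * ((y - 1) / (y - x)) ≠ 0 := mul_ne_zero hx0 hb0
  have ha1 : x * ((y - 1) / (y - x)) ≠ 1 := by
    intro hh
    have hh' : x * (y - 1) = y - x := by field_simp at hh; linear_combination hh
    have h2 : y * (x - 1) = 0 := by linear_combination hh'
    rcases mul_eq_zero.mp h2 with h' | h'
    · exact hy0 h'
    · exact hx1 (by linear_combination h')
  have hanb : x * ((y - 1) / (y - x)) ≠ (y - 1) / (y - x) := by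
    intro hh
    have h2 : ((y - 1) / (y - x)) * (x - 1) = 0 := by linear_combination hh
    rcases mul_eq_zero.mp h2 with h' | h'
    · exact hb0 h'
    · exact hx1 (by linear_combination h')
  obtain ⟨sx, hsx⟩ := hxs
  obtain ⟨ty, hty⟩ := hys
  have hty0 : ty ≠ 0 := by rintro rfl; exact hy0 (by simp [hty])
  refine ⟨⟨hanb, ha0, ha1, hb0, hb1, ?_, ?_⟩, ?_⟩
  · exact ⟨sx * ((y - 1) / (y - x)), by rw [hsx]; ring⟩
  · refine ⟨ty * ((1 - x) / (y - x)), ?_⟩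
    have hyx' : ty * ty - x ≠ 0 := by rw [← hty]; exact hyx
    have hyx'' : ty ^ 2 - x ≠ 0 := by rw [sq]; exact hyx'
    rw [hty]
    field_simp
    ring
  · unfold PsiMap
    simp only
    rw [Prod.mk.injEq]
    constructor
    · exact mul_div_cancel_right₀ x hb0
    · rw [div_eq_iff h1b]
      field_simp
      ring

lemma mem_SSub_iff {x y : F} (h : (x, y) ∈ SPairs F) (i j r s : Fin 2) :
    (x, y) ∈ SSub F i j r s ↔
      (ESub (x * ((y - 1) / (y - x))) ((y - 1) / (y - x)) i j r s).Nonempty := by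
  obtain ⟨hsig, hpsi⟩ := pre_mem h
  constructor
  · rintro ⟨⟨a', b'⟩, ⟨hsig', hne⟩, hmap⟩
    obtain ⟨-, -, -, hb0', hb1', -, -⟩ := hsig'
    simp only at hb0' hb1' hne
    unfold PsiMap at hmap
    simp only [Prod.mk.injEq] at hmap
    obtain ⟨hx, hy⟩ := hmap
    obtain ⟨-, -, hxy, hx0, hx1, hy0, hy1⟩ := h
    simp only at hxy hx0 hx1 hy0 hy1
    have hyx : y - x ≠ 0 := sub_ne_zero.mpr (Ne.symm hxy)
    have h1b' : 1 - b' ≠ 0 := sub_ne_zero.mpr (fun hh => hb1' hh.symm)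
    have h1 : a' = x * b' := by
      rw [div_eq_iff hb0'] at hx
      linear_combination hx
    have h2 : 1 - a' = y * (1 - b') := by
      rw [div_eq_iff h1b'] at hy
      linear_combination hy
    have hbval : b' = (y - 1) / (y - x) := by
      rw [eq_div_iff hyx]
      linear_combination h1 + h2
    have haval : a' = x * ((y - 1) / (y - x)) := by rw [h1, hbval]
    rw [← haval, ← hbval]
    exact hne
  · intro hne
    exact ⟨_, ⟨hsig, hne⟩, hpsi⟩

end Helpers

set_option maxHeartbeats 2000000 in
theorem ssub_aux {F : Type*} [Field F] [Fintype F]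
    (hns : ¬ IsSquare (-1 : F)) :
    ∀ x y : F, (x, y) ∈ SPairs F →
      (((x, y) ∈ SSub F 0 1 1 0 ↔ (x, y) ∈ SSub F 1 0 0 1) ∧
       ((x, y) ∈ SSub F 0 1 1 0 ↔
          IsSquare ((1 - y) * (x - y)) ∧ IsSquare ((1 - x) * (y - x))) ∧
       ((x, y) ∈ SSub F 0 1 0 0 ↔
          IsSquare ((x - 1) * (y - x)) ∧
          IsSquare ((x ^ 2 - 2 * x + y) * (y - x)))) := by
  intro x y hxy
  obtain ⟨hsig, -⟩ := pre_mem hxy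
  have h3 := (mem_SSub_iff hxy 0 1 1 0).trans (E3_iff hns hsig)
  have h4 := (mem_SSub_iff hxy 1 0 0 1).trans (E4_iff hns hsig)
  have h5 := (mem_SSub_iff hxy 0 1 0 0).trans (E5_iff hns hsig)
  obtain ⟨hxs, hys, hxy', hx0, hx1, hy0, hy1⟩ := hxy
  simp only at hxs hys hxy' hx0 hx1 hy0 hy1
  have hyx : y - x ≠ 0 := sub_ne_zero.mpr (Ne.symm hxy')
  have hy1' : y - 1 ≠ 0 := sub_ne_zero.mpr hy1
  have hb0 : (y - 1) / (y - x) ≠ 0 := div_ne_zero hy1' hyx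
  obtain ⟨sx, hsx⟩ := hxs
  have hsx0 : sx ≠ 0 := by rintro rfl; exact hx0 (by simp [hsx])
  obtain ⟨ty, hty⟩ := hys
  have hty0 : ty ≠ 0 := by rintro rfl; exact hy0 (by simp [hty])
  have hx1yx : (x - 1) * (y - x) ≠ 0 := mul_ne_zero (sub_ne_zero.mpr hx1) hyx
  have Tb : IsSquare ((y - 1) / (y - x)) ↔ IsSquare ((1 - y) * (x - y)) := by
    rw [sq_div_iff' hyx, show (y - 1) * (y - x) = (1 - y) * (x - y) by ring]
  have Ta : IsSquare (x * ((y - 1) / (y - x))) ↔ IsSquare ((1 - y) * (x - y)) := by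
    rw [show x * ((y - 1) / (y - x)) = sx ^ 2 * ((y - 1) / (y - x)) by rw [hsx]; ring,
      sq_sq_mul_iff' hsx0]
    exact Tb
  have Ta1 : IsSquare (x * ((y - 1) / (y - x)) - 1) ↔ IsSquare ((x - 1) * (y - x)) := by
    have e : x * ((y - 1) / (y - x)) - 1 = y * (x - 1) / (y - x) := by
      rw [eq_div_iff hyx]
      field_simp
      ring
    rw [e, sq_div_iff' hyx,
      show y * (x - 1) * (y - x) = ty ^ 2 * ((x - 1) * (y - x)) by rw [hty]; ring,
      sq_sq_mul_iff' hty0]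
  have Tb1 : IsSquare ((y - 1) / (y - x) - 1) ↔ IsSquare ((x - 1) * (y - x)) := by
    have e : (y - 1) / (y - x) - 1 = (x - 1) / (y - x) := by
      rw [eq_div_iff hyx]
      field_simp
      ring
    rw [e, sq_div_iff' hyx]
  have Tneg : IsSquare ((1 - x) * (y - x)) ↔ ¬ IsSquare ((x - 1) * (y - x)) := by
    rw [show (1 - x) * (y - x) = -((x - 1) * (y - x)) by ring]
    exact neg_sq_iff' hns hx1yx
  have T5 : IsSquare (x * ((y - 1) / (y - x)) *
      (x * ((y - 1) / (y - x)) * ((y - 1) / (y - x)) + (y - 1) / (y - x) -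
        x * ((y - 1) / (y - x)))) ↔ IsSquare ((x ^ 2 - 2 * x + y) * (y - x)) := by
    have hc : (y - 1) / (y - x) * (y - x) = y - 1 := div_mul_cancel₀ _ hyx
    set c := (y - 1) / (y - x) with hc_def
    have hc1 : x * c + 1 - x = (x ^ 2 - 2 * x + y) / (y - x) := by
      rw [eq_div_iff hyx]
      linear_combination x * hc
    have e : x * c * (x * c * c + c - x * c) =
        (sx * c) ^ 2 * ((x ^ 2 - 2 * x + y) / (y - x)) := by
      rw [← hc1, hsx]; ring
    rw [e, sq_sq_mul_iff' (mul_ne_zero hsx0 hb0), sq_div_iff' hyx]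
  refine ⟨?_, ?_, ?_⟩
  · rw [h3, h4, Ta1, Tb1, Ta, Tb]
  · rw [h3, Ta1, Tb, Tneg]
    tauto
  · rw [h5, Tb1, T5]


/-- Lemma 2.5: if `-1` is a nonsquare then `S_{00}^{00} = S_{00}^{11} = ∅`, and
for `(x,y) ∈ S`: `(x,y) ∈ S_{01}^{10}` iff `(x,y) ∈ S_{10}^{01}` iff
`(1-y)(x-y)` and `(1-x)(y-x)` are squares, and `(x,y) ∈ S_{01}^{00}` iff
`(x-1)(y-x)` and `(x²-2x+y)(y-x)` are squares. -/
theorem ssub_neg_one_nonsquare (F : Type*) [Field F] [Fintype F]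
    (hodd : Odd (Fintype.card F)) (hns : ¬ IsSquare (-1 : F)) :
    SSub F 0 0 0 0 = ∅ ∧ SSub F 0 0 1 1 = ∅ ∧
    ∀ x y : F, (x, y) ∈ SPairs F →
      (((x, y) ∈ SSub F 0 1 1 0 ↔ (x, y) ∈ SSub F 1 0 0 1) ∧
       ((x, y) ∈ SSub F 0 1 1 0 ↔
          IsSquare ((1 - y) * (x - y)) ∧ IsSquare ((1 - x) * (y - x))) ∧
       ((x, y) ∈ SSub F 0 1 0 0 ↔
          IsSquare ((x - 1) * (y - x)) ∧
          IsSquare ((x ^ 2 - 2 * x + y) * (y - x)))) := by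
  have empty1 : SSub F 0 0 0 0 = ∅ := by
    rw [Set.eq_empty_iff_forall_notMem]
    rintro p ⟨q, ⟨hq, hne⟩, -⟩
    rw [E1_empty hns (a := q.1) (b := q.2) (by simpa using hq)] at hne
    exact Set.not_nonempty_empty hne
  have empty2 : SSub F 0 0 1 1 = ∅ := by
    rw [Set.eq_empty_iff_forall_notMem]
    rintro p ⟨q, ⟨hq, hne⟩, -⟩
    rw [E2_empty hns (a := q.1) (b := q.2) (by simpa using hq)] at hne
    exact Set.not_nonempty_empty hne
  refine ⟨empty1, empty2, ?_⟩
  exact ssub_aux hns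
end
end

section
/- Let (x,y) ∈ S. (i) If y + 1 − x = 0 and x² − x − 1 = 0 and q > 43, then (x,y) ∈ S_{01}^{01}. (ii) If y + 1 − x ≠ 0 or x² − x − 1 ≠ 0, then (x,y) ∈ S_{01}^{01} if and only if both (y + xy − x)(x − y − 1) and (y − 2x + x²)(x − y)(x − y − 1) are nonsquares, while (2xy − y² − x)(x − y)(x − y − 1) is a square. -/
open scoped Classical

noncomputable section

section Tool
variable {F : Type*} [Field F] [Fintype F]

lemma isSquare_sq_mul_iff {z w : F} (hz : z ≠ 0) : IsSquare (z^2 * w) ↔ IsSquare w := by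
  constructor
  · rintro ⟨t, ht⟩
    refine ⟨t / z, ?_⟩
    field_simp
    linear_combination ht
  · rintro ⟨t, ht⟩
    exact ⟨z * t, by rw [ht]; ring⟩

lemma nonsquare_ne_zero {w : F} (h : ¬ IsSquare w) : w ≠ 0 := by
  rintro rfl; exact h ⟨0, by ring⟩

lemma char_ne_two (hodd : Odd (Fintype.card F)) : ringChar F ≠ 2 := by
  intro h
  have h2 := FiniteField.even_card_iff_char_two.mp h
  have h3 := Nat.odd_iff.mp hodd
  omega

lemma mul_nonsq_nonsq {α β : F}
    (ha : ¬ IsSquare α) (hb : ¬ IsSquare β) : IsSquare (α * β) := by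
  have h1 : quadraticChar F α = -1 := quadraticChar_neg_one_iff_not_isSquare.mpr ha
  have h2 : quadraticChar F β = -1 := quadraticChar_neg_one_iff_not_isSquare.mpr hb
  have h3 : quadraticChar F (α * β) = 1 := by rw [map_mul, h1, h2]; ring
  exact (quadraticChar_one_iff_isSquare
    (mul_ne_zero (nonsquare_ne_zero ha) (nonsquare_ne_zero hb))).mp h3

end Tool

section Canon
variable {F : Type*} [Field F] [Fintype F]

/-- canonical preimage facts -/
lemma canonical_mem (x y : F) (hsx : IsSquare x) (hsy : IsSquare y) (hne : x ≠ y)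
    (hx0 : x ≠ 0) (hx1 : x ≠ 1) (hy0 : y ≠ 0) (hy1 : y ≠ 1) :
    (x * ((y - 1) / (y - x)), (y - 1) / (y - x)) ∈ SigSet F ∧
      PsiMap (x * ((y - 1) / (y - x)), (y - 1) / (y - x)) = (x, y) := by
  have hd : y - x ≠ 0 := sub_ne_zero.mpr (Ne.symm hne)
  have hy1' : y - 1 ≠ 0 := sub_ne_zero.mpr hy1
  have hx1' : (1:F) - x ≠ 0 := sub_ne_zero.mpr (Ne.symm hx1)
  set b : F := (y - 1) / (y - x) with hbdef
  have hb0 : b ≠ 0 := div_ne_zero hy1' hd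
  have hb1 : b ≠ 1 := by
    intro h
    rw [hbdef, div_eq_one_iff_eq hd] at h
    exact hx1 (by linear_combination h)
  have h1b : (1:F) - b = (1 - x)/(y - x) := by rw [hbdef]; field_simp; ring
  have h1a : (1:F) - x * b = y * (1 - x)/(y - x) := by rw [hbdef]; field_simp; ring
  constructor
  · refine ⟨?_, mul_ne_zero hx0 hb0, ?_, hb0, hb1, ?_, ?_⟩
    · show x * b ≠ b
      intro h
      have h2 : (x - 1) * b = 0 := by linear_combination h
      rcases mul_eq_zero.mp h2 with h' | h'
      · exact hx1 (by linear_combination h')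
      · exact hb0 h'
    · show x * b ≠ 1
      rw [hbdef, mul_div_assoc']
      intro h
      rw [div_eq_one_iff_eq hd] at h
      have h2 : y * (x - 1) = 0 := by linear_combination h
      rcases mul_eq_zero.mp h2 with h' | h'
      · exact hy0 h'
      · exact hx1 (by linear_combination h')
    · obtain ⟨s, hs⟩ := hsx
      exact ⟨s * b, by show x * b * b = s * b * (s * b); rw [hs]; ring⟩
    · obtain ⟨t, ht⟩ := hsy
      refine ⟨t * (1 - x) / (y - x), ?_⟩
      show (1 - x * b) * (1 - b) = _
      rw [h1a, h1b, ht]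
      field_simp
  · have hb1'' : (1:F) - b ≠ 0 := sub_ne_zero.mpr (Ne.symm hb1)
    simp only [PsiMap, Prod.mk.injEq]
    constructor
    · show x * b / b = x
      rw [mul_div_assoc, div_self hb0, mul_one]
    · show (1 - x * b) / (1 - b) = y
      rw [h1a, h1b, div_eq_iff (div_ne_zero hx1' hd)]
      ring

end Canon
section Backward
set_option maxHeartbeats 1000000
variable {F : Type*} [Field F] [Fintype F]

lemma isSquare_zero' : IsSquare (0 : F) := ⟨0, by ring⟩

lemma backward_mem (x y : F) (hsx : IsSquare x) (hsy : IsSquare y) (hne : x ≠ y)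
    (hx0 : x ≠ 0) (hx1 : x ≠ 1) (hy0 : y ≠ 0) (hy1 : y ≠ 1)
    (h1 : ¬ IsSquare ((y + x * y - x) * (x - y - 1)))
    (h2 : ¬ IsSquare ((y - 2 * x + x ^ 2) * (x - y) * (x - y - 1)))
    (h3 : IsSquare ((2 * x * y - y ^ 2 - x) * (x - y) * (x - y - 1))) :
    (x, y) ∈ SSub F 0 1 0 1 := by
  have hd : y - x ≠ 0 := sub_ne_zero.mpr (Ne.symm hne)
  have hy1' : y - 1 ≠ 0 := sub_ne_zero.mpr hy1
  have hx1' : x - 1 ≠ 0 := sub_ne_zero.mpr hx1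
  have hxy1 : x - y - 1 ≠ 0 := by
    intro h; exact h1 (by rw [h, mul_zero]; exact isSquare_zero')
  set b : F := (y - 1) / (y - x) with hbdef
  set a : F := x * b with hadef
  set c1 : F := a - 2 * b + b ^ 2 with hc1def
  set c2 : F := a ^ 2 - b with hc2def
  set c3 : F := b * (a * b - 2 * a + 1) with hc3def
  set c4 : F := (1 - a) * (a - b - a * b) with hc4def
  set k1 : F := (y - 1) * (x - 1) / (y - x) ^ 2 with hk1def
  set k2 : F := (y - 1) * (x - 1) / (y - x) ^ 3 with hk2def
  have hk1 : k1 ≠ 0 := by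
    rw [hk1def]; exact div_ne_zero (mul_ne_zero hy1' hx1') (pow_ne_zero _ hd)
  have hk2 : k2 ≠ 0 := by
    rw [hk2def]; exact div_ne_zero (mul_ne_zero hy1' hx1') (pow_ne_zero _ hd)
  -- closed forms
  have hc1 : c1 = (y - 1) * (x - 1) * (y + 1 - x) / (y - x) ^ 2 := by
    rw [hc1def, hadef, hbdef]; field_simp; ring
  have hc2 : c2 = (y - 1) * (x - 1) * (y + x * y - x) / (y - x) ^ 2 := by
    rw [hc2def, hadef, hbdef]; field_simp; ring
  have hc3 : c3 = (y - 1) * (x - 1) * (2 * x * y - y ^ 2 - x) / (y - x) ^ 3 := by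
    rw [hc3def, hadef, hbdef]; field_simp; ring
  have hc4 : c4 = y * ((y - 1) * (x - 1)) * (y - 2 * x + x ^ 2) / (y - x) ^ 3 := by
    rw [hc4def, hadef, hbdef]; field_simp; ring
  have hc1ne : c1 ≠ 0 := by
    rw [hc1]
    apply div_ne_zero _ (pow_ne_zero _ hd)
    refine mul_ne_zero (mul_ne_zero hy1' hx1') ?_
    intro h; exact hxy1 (by linear_combination -h)
  have hQ1 : -(c1 * c2) = k1 ^ 2 * ((y + x * y - x) * (x - y - 1)) := by
    rw [hc1, hc2, hk1def]; field_simp; ring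
  have hQ3 : c1 * c3 = k2 ^ 2 * ((2 * x * y - y ^ 2 - x) * (x - y) * (x - y - 1)) := by
    rw [hc1, hc3, hk2def]; field_simp; ring
  have hQ5 : c1 * c4 = k2 ^ 2 * (y * ((y - 2 * x + x ^ 2) * (x - y) * (x - y - 1))) := by
    rw [hc1, hc4, hk2def]; field_simp; ring
  -- the candidate solution
  have hSu : IsSquare (c1 ^ 2) := ⟨c1, sq c1⟩
  have hNv : ¬ IsSquare (-(c1 * c2)) := by
    rw [hQ1, isSquare_sq_mul_iff hk1]; exact h1
  have hr : IsSquare (c1 * c3) := by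
    rw [hQ3, isSquare_sq_mul_iff hk2]; exact h3
  have hs4 : ¬ IsSquare (c1 * c4) := by
    obtain ⟨t, ht⟩ := hsy
    have ht0 : t ≠ 0 := by rintro rfl; exact hy0 (by rw [ht]; ring)
    rw [hQ5, show k2 ^ 2 * (y * ((y - 2 * x + x ^ 2) * (x - y) * (x - y - 1)))
        = (k2 * t) ^ 2 * ((y - 2 * x + x ^ 2) * (x - y) * (x - y - 1)) from by rw [ht]; ring,
      isSquare_sq_mul_iff (mul_ne_zero hk2 ht0)]
    exact h2
  obtain ⟨hmemSig, hPsi⟩ := canonical_mem x y hsx hsy hne hx0 hx1 hy0 hy1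
  refine ⟨(a, b), ⟨hmemSig, ⟨(c1 ^ 2, c1 * c2), ?_, ?_, ?_, ?_, ?_⟩⟩, hPsi⟩
  · -- ESet membership
    constructor
    · intro h
      rw [Prod.mk.injEq] at h
      exact hc1ne (sq_eq_zero_iff.mp h.1)
    · show AssocEq a b (c1 ^ 2) (c1 * c2)
      unfold AssocEq
      have e1 : psiOrtho a b (c1 ^ 2) = a * c1 ^ 2 := by rw [psiOrtho, if_pos hSu]
      have e2 : psiOrtho a b (-(c1 * c2)) = b * -(c1 * c2) := by rw [psiOrtho, if_neg hNv]
      rw [e1, e2]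
      have e3 : a * c1 ^ 2 - c1 * c2 = c1 * c3 := by rw [hc1def, hc2def, hc3def, hadef]; ring
      have e4 : c1 ^ 2 - c1 * c2 - b * -(c1 * c2) = c1 * c4 := by
        rw [hc1def, hc2def, hc4def, hadef]; ring
      rw [e3, e4]
      rw [psiOrtho, if_pos hr, psiOrtho, if_neg hs4]
      rw [hc1def, hc2def, hc3def, hc4def, hadef]; ring
  · show IsSquare (c1 ^ 2) ↔ (0 : Fin 2) = 0
    simpa using hSu
  · show IsSquare (-(c1 * c2)) ↔ (1 : Fin 2) = 0
    simp only [show ((1 : Fin 2) = 0) ↔ False from by decide, iff_false]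
    exact hNv
  · show IsSquare (psiOrtho a b (c1 ^ 2) - c1 * c2) ↔ (0 : Fin 2) = 0
    have e1 : psiOrtho a b (c1 ^ 2) = a * c1 ^ 2 := by rw [psiOrtho, if_pos hSu]
    rw [e1, show a * c1 ^ 2 - c1 * c2 = c1 * c3 from by rw [hc1def, hc2def, hc3def, hadef]; ring]
    simpa using hr
  · show IsSquare (c1 ^ 2 - c1 * c2 - psiOrtho a b (-(c1 * c2))) ↔ (1 : Fin 2) = 0
    have e2 : psiOrtho a b (-(c1 * c2)) = b * -(c1 * c2) := by rw [psiOrtho, if_neg hNv]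
    rw [e2, show c1 ^ 2 - c1 * c2 - b * -(c1 * c2) = c1 * c4 from by
      rw [hc1def, hc2def, hc4def, hadef]; ring]
    simp only [show ((1 : Fin 2) = 0) ↔ False from by decide, iff_false]
    exact hs4

end Backward
section Forward
set_option maxHeartbeats 1000000
variable {F : Type*} [Field F] [Fintype F]

lemma psiOrtho_zero (a b : F) : psiOrtho a b 0 = 0 := by
  unfold psiOrtho; split_ifs <;> ring

lemma isSquare_mul_sq_iff {z w : F} (hz : z ≠ 0) : IsSquare (w * z^2) ↔ IsSquare w := by
  rw [mul_comm]; exact isSquare_sq_mul_iff hz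

lemma forward_mem (x y : F) (hsx : IsSquare x) (hsy : IsSquare y) (hne : x ≠ y)
    (hx0 : x ≠ 0) (hx1 : x ≠ 1) (hy0 : y ≠ 0) (hy1 : y ≠ 1)
    (hcase : y + 1 - x ≠ 0 ∨ x ^ 2 - x - 1 ≠ 0)
    (hmem : (x, y) ∈ SSub F 0 1 0 1) :
    ¬ IsSquare ((y + x * y - x) * (x - y - 1)) ∧
    ¬ IsSquare ((y - 2 * x + x ^ 2) * (x - y) * (x - y - 1)) ∧
    IsSquare ((2 * x * y - y ^ 2 - x) * (x - y) * (x - y - 1)) := by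
  have hd : y - x ≠ 0 := sub_ne_zero.mpr (Ne.symm hne)
  have hy1' : y - 1 ≠ 0 := sub_ne_zero.mpr hy1
  have hx1' : x - 1 ≠ 0 := sub_ne_zero.mpr hx1
  obtain ⟨⟨a, b⟩, ⟨hSig, ⟨⟨u, v⟩, hE⟩⟩, hPsi⟩ := hmem
  obtain ⟨hab, ha0, ha1, hb0, hb1, hsab, hs1ab⟩ := hSig
  simp only at hab ha0 ha1 hb0 hb1 hsab hs1ab
  have hb1' : (1 : F) - b ≠ 0 := sub_ne_zero.mpr (Ne.symm hb1)
  simp only [PsiMap, Prod.mk.injEq] at hPsi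
  obtain ⟨hPm1, hPm2⟩ := hPsi
  rw [div_eq_iff hb0] at hPm1
  rw [div_eq_iff hb1'] at hPm2
  have ha : a = x * b := by linear_combination hPm1
  subst ha
  have hbd : b * (y - x) = y - 1 := by linear_combination hPm2
  have hbv : b = (y - 1) / (y - x) := by rw [eq_div_iff hd]; exact hbd
  -- decompose the E-set membership
  obtain ⟨⟨hne00, hAssoc0⟩, hi, hj, hr, hs⟩ := hE
  have hAssoc : AssocEq (x * b) b u v := hAssoc0
  have hSu : IsSquare u := hi.mpr rfl
  have hNv : ¬ IsSquare (-v) := fun h => absurd (hj.mp h) (by decide)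
  have hv0 : v ≠ 0 := by rintro rfl; exact hNv (by rw [neg_zero]; exact isSquare_zero')
  have hpsiu : psiOrtho (x * b) b u = x * b * u := by rw [psiOrtho, if_pos hSu]
  have hpsinv : psiOrtho (x * b) b (-v) = b * (-v) := by rw [psiOrtho, if_neg hNv]
  have hRs : IsSquare (x * b * u - v) := by
    have h2 : IsSquare (psiOrtho (x * b) b u - v) := hr.mpr rfl
    rwa [hpsiu] at h2
  have hSs : ¬ IsSquare (u - v - b * (-v)) := by
    rw [← hpsinv]
    exact fun h => absurd (hs.mp h) (by decide)
  have hu0 : u ≠ 0 := by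
    rintro rfl
    rw [mul_zero, zero_sub] at hRs
    exact hNv hRs
  obtain ⟨s, hsu⟩ := hSu
  have hs0 : s ≠ 0 := by rintro rfl; exact hu0 (by rw [hsu]; ring)
  -- the associativity equation, expanded
  unfold AssocEq at hAssoc
  rw [hpsiu, hpsinv] at hAssoc
  rw [psiOrtho, if_pos hRs, psiOrtho, if_neg hSs] at hAssoc
  -- heq : x*b*(x*b*u - v) = b*(-v) + b*(u - v - b*(-v))
  set c1 : F := x * b - 2 * b + b ^ 2 with hc1def
  set c2 : F := (x * b) ^ 2 - b with hc2def
  set c3 : F := b * (x * b * b - 2 * (x * b) + 1) with hc3def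
  set c4 : F := (1 - x * b) * (x * b - b - x * b * b) with hc4def
  set k1 : F := (y - 1) * (x - 1) / (y - x) ^ 2 with hk1def
  set k2 : F := (y - 1) * (x - 1) / (y - x) ^ 3 with hk2def
  have hk1 : k1 ≠ 0 := by
    rw [hk1def]; exact div_ne_zero (mul_ne_zero hy1' hx1') (pow_ne_zero _ hd)
  have hk2 : k2 ≠ 0 := by
    rw [hk2def]; exact div_ne_zero (mul_ne_zero hy1' hx1') (pow_ne_zero _ hd)
  have hc1 : c1 = (y - 1) * (x - 1) * (y + 1 - x) / (y - x) ^ 2 := by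
    rw [hc1def, hbv]; field_simp; ring
  have hc2 : c2 = (y - 1) * (x - 1) * (y + x * y - x) / (y - x) ^ 2 := by
    rw [hc2def, hbv]; field_simp; ring
  have hc3 : c3 = (y - 1) * (x - 1) * (2 * x * y - y ^ 2 - x) / (y - x) ^ 3 := by
    rw [hc3def, hbv]; field_simp; ring
  have hc4 : c4 = y * ((y - 1) * (x - 1)) * (y - 2 * x + x ^ 2) / (y - x) ^ 3 := by
    rw [hc4def, hbv]; field_simp; ring
  have hQ1 : -(c1 * c2) = k1 ^ 2 * ((y + x * y - x) * (x - y - 1)) := by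
    rw [hc1, hc2, hk1def]; field_simp; ring
  have hQ3 : c1 * c3 = k2 ^ 2 * ((2 * x * y - y ^ 2 - x) * (x - y) * (x - y - 1)) := by
    rw [hc1, hc3, hk2def]; field_simp; ring
  have hQ5 : c1 * c4 = k2 ^ 2 * (y * ((y - 2 * x + x ^ 2) * (x - y) * (x - y - 1))) := by
    rw [hc1, hc4, hk2def]; field_simp; ring
  have hI3 : x * b * c1 - c2 = c3 := by rw [hc1def, hc2def, hc3def]; ring
  have hI4 : c1 - c2 + b * c2 = c4 := by rw [hc1def, hc2def, hc4def]; ring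
  have hlin : u * c2 = v * c1 := by
    rw [hc1def, hc2def]; linear_combination hAssoc
  rw [hsu] at hlin
  -- c1 and c2 are nonzero
  have hc1ne : c1 ≠ 0 := by
    intro h0
    have hc2z : c2 = 0 := by
      have h2 : s * s * c2 = 0 := by rw [hlin, h0, mul_zero]
      rcases mul_eq_zero.mp h2 with h' | h'
      · exact absurd h' (mul_ne_zero hs0 hs0)
      · exact h'
    rw [hc1] at h0
    rw [hc2] at hc2z
    have e1 : y + 1 - x = 0 := by
      rcases div_eq_zero_iff.mp h0 with h' | h'
      · rcases mul_eq_zero.mp h' with h'' | h''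
        · exact absurd h'' (mul_ne_zero hy1' hx1')
        · exact h''
      · exact absurd h' (pow_ne_zero _ hd)
    have e2 : y + x * y - x = 0 := by
      rcases div_eq_zero_iff.mp hc2z with h' | h'
      · rcases mul_eq_zero.mp h' with h'' | h''
        · exact absurd h'' (mul_ne_zero hy1' hx1')
        · exact h''
      · exact absurd h' (pow_ne_zero _ hd)
    rcases hcase with hc | hc
    · exact hc e1
    · exact hc (by linear_combination e2 - (x + 1) * e1)
  -- transfers
  have key1 : (-v) * c1 ^ 2 = (s * k1) ^ 2 * ((y + x * y - x) * (x - y - 1)) := by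
    linear_combination c1 * hlin + (s * s) * hQ1
  have key3 : (x * b * u - v) * c1 ^ 2
      = (s * k2) ^ 2 * ((2 * x * y - y ^ 2 - x) * (x - y) * (x - y - 1)) := by
    rw [hsu]
    linear_combination c1 * hlin + (s * s * c1) * hI3 + (s * s) * hQ3
  have key4 : (u - v - b * (-v)) * c1 ^ 2
      = (s * k2) ^ 2 * (y * ((y - 2 * x + x ^ 2) * (x - y) * (x - y - 1))) := by
    rw [hsu]
    linear_combination (c1 - b * c1) * hlin + (s * s * c1) * hI4 + (s * s) * hQ5
  have hsk1 : s * k1 ≠ 0 := mul_ne_zero hs0 hk1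
  have hsk2 : s * k2 ≠ 0 := mul_ne_zero hs0 hk2
  refine ⟨?_, ?_, ?_⟩
  · intro hP
    apply hNv
    rw [← isSquare_mul_sq_iff hc1ne, key1]
    exact (isSquare_sq_mul_iff hsk1).mpr hP
  · intro hP
    apply hSs
    rw [← isSquare_mul_sq_iff hc1ne, key4]
    obtain ⟨t, ht⟩ := hsy
    have ht0 : t ≠ 0 := by rintro rfl; exact hy0 (by rw [ht]; ring)
    rw [show (s * k2) ^ 2 * (y * ((y - 2 * x + x ^ 2) * (x - y) * (x - y - 1)))
        = (s * k2 * t) ^ 2 * ((y - 2 * x + x ^ 2) * (x - y) * (x - y - 1)) from by rw [ht]; ring]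
    exact (isSquare_sq_mul_iff (mul_ne_zero hsk2 ht0)).mpr hP
  · rw [← isSquare_sq_mul_iff hsk2, ← key3, isSquare_mul_sq_iff hc1ne]
    exact hRs

end Forward
section Sums
set_option maxHeartbeats 1000000
variable {F : Type*} [Field F] [Fintype F]

lemma qc_sum_affine (hF : ringChar F ≠ 2) {α : F} (β : F) (hα : α ≠ 0) :
    ∑ w : F, quadraticChar F (α * w + β) = 0 := by
  have e : ∀ w : F, quadraticChar F (α * w + β)
      = quadraticChar F (((Equiv.mulLeft₀ α hα).trans (Equiv.addRight β)) w) := by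
    intro w; rfl
  rw [Fintype.sum_congr _ _ e, Equiv.sum_comp]
  exact quadraticChar_sum_zero hF

lemma qc_sum_quad (hF : ringChar F ≠ 2) {r s : F} (hrs : r ≠ s) :
    ∑ w : F, quadraticChar F ((w - r) * (w - s)) = -1 := by
  have hδ : s - r ≠ 0 := sub_ne_zero.mpr (Ne.symm hrs)
  -- shift by r
  have e1 : ∑ w : F, quadraticChar F ((w - r) * (w - s))
      = ∑ w : F, quadraticChar F (w * (w - (s - r))) := by
    rw [← Equiv.sum_comp (Equiv.addRight r) (fun w => quadraticChar F ((w - r) * (w - s)))]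
    apply Fintype.sum_congr
    intro w
    have : (Equiv.addRight r) w = w + r := rfl
    rw [this]
    ring_nf
  rw [e1]
  set δ := s - r with hδdef
  -- drop w = 0 and map to F \ {1}
  have e2 : ∑ w : F, quadraticChar F (w * (w - δ))
      = ∑ w ∈ Finset.univ.erase (0 : F), quadraticChar F (w * (w - δ)) := by
    rw [Finset.sum_erase]
    rw [zero_mul, quadraticChar_zero]
  rw [e2]
  have e3 : ∑ w ∈ Finset.univ.erase (0 : F), quadraticChar F (w * (w - δ))
      = ∑ z ∈ Finset.univ.erase (1 : F), quadraticChar F z := by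
    apply Finset.sum_nbij' (fun w => (w - δ) / w) (fun z => δ / (1 - z))
    · intro w hw
      have hw0 : w ≠ 0 := Finset.ne_of_mem_erase hw
      simp only [Finset.mem_erase, Finset.mem_univ, and_true]
      intro h
      rw [div_eq_one_iff_eq hw0] at h
      exact hδ (by linear_combination -h)
    · intro z hz
      have hz1 : (1:F) - z ≠ 0 := sub_ne_zero.mpr (Ne.symm (Finset.ne_of_mem_erase hz))
      simp only [Finset.mem_erase, Finset.mem_univ, and_true]
      exact div_ne_zero hδ hz1
    · intro w hw
      have hw0 : w ≠ 0 := Finset.ne_of_mem_erase hw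
      field_simp
      rw [sub_sub_cancel, div_self hδ]
    · intro z hz
      have hz1 : (1:F) - z ≠ 0 := sub_ne_zero.mpr (Ne.symm (Finset.ne_of_mem_erase hz))
      field_simp
      ring
    · intro w hw
      have hw0 : w ≠ 0 := Finset.ne_of_mem_erase hw
      have : w * (w - δ) = w^2 * ((w - δ) / w) := by field_simp
      rw [this, map_mul, map_pow]
      have h1 : (quadraticChar F w) ^ 2 = 1 := by
        rcases quadraticChar_dichotomy hw0 with h | h <;> rw [h] <;> norm_num
      rw [h1, one_mul]
  rw [e3, Finset.sum_erase_eq_sub (Finset.mem_univ (1:F)), quadraticChar_sum_zero hF,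
    map_one]
  ring

lemma qc_ge_neg_one (z : F) : -1 ≤ quadraticChar F z := by
  rcases eq_or_ne z 0 with h | h
  · rw [h, quadraticChar_zero]; norm_num
  · rcases quadraticChar_dichotomy h with h' | h' <;> rw [h'] <;> norm_num

end Sums
section Pattern
set_option maxHeartbeats 1000000
variable {F : Type*} [Field F] [Fintype F]

lemma exists_pattern (hodd : Odd (Fintype.card F)) (A : F) (hA : A ^ 2 + A = 1)
    (hcase : IsSquare A ∨ ¬ IsSquare (-1 : F)) :
    ∃ w : F, ¬ IsSquare (-w) ∧ IsSquare (A - w) ∧ ¬ IsSquare (1 - A * w) := by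
  have hF : ringChar F ≠ 2 := char_ne_two hodd
  have hA0 : A ≠ 0 := by rintro rfl; norm_num at hA
  have hA1 : A + 1 ≠ 0 := by
    intro h
    have hA' : A = -1 := by linear_combination h
    rw [hA'] at hA; norm_num at hA
  have hAA1 : A * (A + 1) = 1 := by linear_combination hA
  have h0A : (0 : F) ≠ A := Ne.symm hA0
  have h0A1 : (0 : F) ≠ A + 1 := Ne.symm hA1
  have hAneA1 : A ≠ A + 1 := by
    intro h
    have : (0 : F) = 1 := by linear_combination h
    exact one_ne_zero this.symm
  -- individual sums
  have S1 : ∑ w : F, quadraticChar F (-w) = 0 := by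
    have e : ∀ w : F, quadraticChar F (-w) = quadraticChar F ((-1) * w + 0) := by
      intro w; norm_num
    rw [Fintype.sum_congr _ _ e, qc_sum_affine hF 0 (by norm_num : (-1 : F) ≠ 0)]
  have S2 : ∑ w : F, quadraticChar F (A - w) = 0 := by
    have e : ∀ w : F, quadraticChar F (A - w) = quadraticChar F ((-1) * w + A) := by
      intro w; ring_nf
    rw [Fintype.sum_congr _ _ e, qc_sum_affine hF A (by norm_num : (-1 : F) ≠ 0)]
  have S3 : ∑ w : F, quadraticChar F (1 - A * w) = 0 := by
    have e : ∀ w : F, quadraticChar F (1 - A * w) = quadraticChar F ((-A) * w + 1) := by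
      intro w; ring_nf
    rw [Fintype.sum_congr _ _ e, qc_sum_affine hF 1 (neg_ne_zero.mpr hA0)]
  have S12 : ∑ w : F, quadraticChar F ((-w) * (A - w)) = -1 := by
    have e : ∀ w : F, quadraticChar F ((-w) * (A - w)) = quadraticChar F ((w - 0) * (w - A)) := by
      intro w; ring_nf
    rw [Fintype.sum_congr _ _ e, qc_sum_quad hF h0A]
  have S13 : ∑ w : F, quadraticChar F ((-w) * (1 - A * w)) = -(quadraticChar F A) := by
    have e : ∀ w : F, quadraticChar F ((-w) * (1 - A * w))
        = quadraticChar F A * quadraticChar F ((w - 0) * (w - (A + 1))) := by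
      intro w
      rw [← map_mul]
      congr 1
      linear_combination w * hAA1
    rw [Fintype.sum_congr _ _ e, ← Finset.mul_sum, qc_sum_quad hF h0A1]
    ring
  have S23 : ∑ w : F, quadraticChar F ((A - w) * (1 - A * w)) = -(quadraticChar F A) := by
    have e : ∀ w : F, quadraticChar F ((A - w) * (1 - A * w))
        = quadraticChar F A * quadraticChar F ((w - A) * (w - (A + 1))) := by
      intro w
      rw [← map_mul]
      congr 1
      linear_combination w * hA - A * hAA1
    rw [Fintype.sum_congr _ _ e, ← Finset.mul_sum, qc_sum_quad hF hAneA1]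
    ring
  -- the total sum
  have hsum : ∑ w : F, (1 - quadraticChar F (-w)) * (1 + quadraticChar F (A - w))
        * (1 - quadraticChar F (1 - A * w))
      = (Fintype.card F : ℤ) + 1
        + ∑ w : F, quadraticChar F ((-w) * (A - w) * (1 - A * w)) := by
    have hexp : ∀ w : F, (1 - quadraticChar F (-w)) * (1 + quadraticChar F (A - w))
          * (1 - quadraticChar F (1 - A * w))
        = 1 - quadraticChar F (-w) + quadraticChar F (A - w) - quadraticChar F (1 - A * w)
          - quadraticChar F ((-w) * (A - w)) + quadraticChar F ((-w) * (1 - A * w))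
          - quadraticChar F ((A - w) * (1 - A * w))
          + quadraticChar F ((-w) * (A - w) * (1 - A * w)) := by
      intro w; simp only [map_mul]; ring
    rw [Fintype.sum_congr _ _ hexp]
    simp only [Finset.sum_add_distrib, Finset.sum_sub_distrib]
    rw [S1, S2, S3, S12, S13, S23, Finset.sum_const, Finset.card_univ, nsmul_eq_mul, mul_one]
    ring
  -- the bound
  have hbound : (3 : ℤ) - (Fintype.card F : ℤ)
      ≤ ∑ w : F, quadraticChar F ((-w) * (A - w) * (1 - A * w)) := by
    classical
    set bad : Finset F := {0, A, A + 1} with hbad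
    have hbsub : bad ⊆ Finset.univ := Finset.subset_univ _
    have hbcard : bad.card = 3 := by
      rw [hbad]
      rw [Finset.card_insert_of_notMem (by simp [h0A, h0A1]),
        Finset.card_insert_of_notMem (by simp [hAneA1]), Finset.card_singleton]
    have hzero : ∀ w ∈ bad, quadraticChar F ((-w) * (A - w) * (1 - A * w)) = 0 := by
      intro w hw
      rw [hbad] at hw
      simp only [Finset.mem_insert, Finset.mem_singleton] at hw
      rcases hw with h | h | h
      · rw [h]
        rw [show (-(0:F)) * (A - 0) * (1 - A * 0) = 0 from by ring, quadraticChar_zero]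
      · rw [h]
        rw [show (-A) * (A - A) * (1 - A * A) = 0 from by ring, quadraticChar_zero]
      · rw [h]
        rw [show (-(A+1)) * (A - (A+1)) * (1 - A * (A+1)) = 0 from by
          linear_combination -(A + 1) * hAA1, quadraticChar_zero]
    have hsplit : ∑ w : F, quadraticChar F ((-w) * (A - w) * (1 - A * w))
        = ∑ w ∈ Finset.univ \ bad, quadraticChar F ((-w) * (A - w) * (1 - A * w)) := by
      rw [← Finset.sum_sdiff hbsub]
      rw [Finset.sum_eq_zero hzero]
      ring
    rw [hsplit]
    have hge : ∀ w ∈ Finset.univ \ bad, (-1 : ℤ) ≤ quadraticChar F ((-w) * (A - w) * (1 - A * w)) :=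
      fun w _ => qc_ge_neg_one _
    have hcard3 : 3 ≤ Fintype.card F := by
      calc 3 = bad.card := hbcard.symm
      _ ≤ Finset.univ.card := Finset.card_le_card hbsub
      _ = Fintype.card F := Finset.card_univ
    have hle := Finset.sum_le_sum hge
    rw [Finset.sum_const, Finset.card_sdiff_of_subset hbsub, hbcard, Finset.card_univ, nsmul_eq_mul,
      Nat.cast_sub hcard3] at hle
    push_cast at hle
    linarith
  -- suppose no pattern point exists
  by_contra hno
  have hvanish : ∀ w : F, w ≠ A → w ≠ A + 1 →
      (1 - quadraticChar F (-w)) * (1 + quadraticChar F (A - w))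
        * (1 - quadraticChar F (1 - A * w)) = 0 := by
    intro w hwA hwA1
    by_contra hfw
    rcases mul_ne_zero_iff.mp hfw with ⟨hXY, hZ⟩
    rcases mul_ne_zero_iff.mp hXY with ⟨hX, hY⟩
    have hw0 : w ≠ 0 := by
      rintro rfl
      apply hZ
      rw [mul_zero, sub_zero, map_one]
      ring
    have hnw0 : -w ≠ 0 := neg_ne_zero.mpr hw0
    have hAw0 : A - w ≠ 0 := sub_ne_zero.mpr (Ne.symm hwA)
    have haw0 : 1 - A * w ≠ 0 := by
      intro h
      apply hwA1
      have h2 : A * (w - (A + 1)) = 0 := by linear_combination -h - hAA1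
      rcases mul_eq_zero.mp h2 with h' | h'
      · exact absurd h' hA0
      · linear_combination h'
    have c1 : quadraticChar F (-w) = -1 := by
      rcases quadraticChar_dichotomy hnw0 with h | h
      · exact absurd (by rw [h]; ring) hX
      · exact h
    have c2 : quadraticChar F (A - w) = 1 := by
      rcases quadraticChar_dichotomy hAw0 with h | h
      · exact h
      · exact absurd (by rw [h]; ring) hY
    have c3 : quadraticChar F (1 - A * w) = -1 := by
      rcases quadraticChar_dichotomy haw0 with h | h
      · exact absurd (by rw [h]; ring) hZ
      · exact h
    exact hno ⟨w, quadraticChar_neg_one_iff_not_isSquare.mp c1,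
      (quadraticChar_one_iff_isSquare hAw0).mp c2,
      quadraticChar_neg_one_iff_not_isSquare.mp c3⟩
  have hzero : ∑ w : F, (1 - quadraticChar F (-w)) * (1 + quadraticChar F (A - w))
        * (1 - quadraticChar F (1 - A * w))
      = ∑ w ∈ ({A, A + 1} : Finset F), (1 - quadraticChar F (-w)) * (1 + quadraticChar F (A - w))
        * (1 - quadraticChar F (1 - A * w)) := by
    symm
    apply Finset.sum_subset (Finset.subset_univ _)
    intro w _ hw
    simp only [Finset.mem_insert, Finset.mem_singleton, not_or] at hw
    exact hvanish w hw.1 hw.2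
  rw [Finset.sum_pair hAneA1] at hzero
  -- compute the two boundary terms
  have hbA : (1 - quadraticChar F (-A)) * (1 + quadraticChar F (A - A))
      * (1 - quadraticChar F (1 - A * A))
      = (1 - quadraticChar F (-A)) * (1 - quadraticChar F A) := by
    rw [sub_self, quadraticChar_zero, show (1 : F) - A * A = A from by linear_combination -hA]
    ring
  have hbA1 : (1 - quadraticChar F (-(A+1))) * (1 + quadraticChar F (A - (A+1)))
      * (1 - quadraticChar F (1 - A * (A+1)))
      = (1 - quadraticChar F (-A)) * (1 + quadraticChar F (-1 : F)) := by
    rw [show A - (A + 1) = -1 from by ring, show (1 : F) - A * (A+1) = 0 from by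
      linear_combination -hAA1, quadraticChar_zero]
    have hprod : quadraticChar F (-(A+1)) * quadraticChar F (-A) = 1 := by
      rw [← map_mul, show (-(A+1)) * (-A) = A * (A + 1) from by ring, hAA1, map_one]
    have : quadraticChar F (-(A+1)) = quadraticChar F (-A) := by
      rcases quadraticChar_dichotomy (neg_ne_zero.mpr hA1) with h | h <;>
        rcases quadraticChar_dichotomy (neg_ne_zero.mpr hA0) with h' | h' <;>
          rw [h, h'] <;> rw [h, h'] at hprod <;> norm_num at hprod
    rw [this]
    ring
  have hfinal : (1 - quadraticChar F (-A)) * (1 - quadraticChar F A)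
      + (1 - quadraticChar F (-A)) * (1 + quadraticChar F (-1 : F)) = 0 := by
    have hmA : quadraticChar F (-A) = quadraticChar F (-1 : F) * quadraticChar F A := by
      rw [← map_mul]; norm_num
    rcases hcase with hsq | hns
    · have hqA : quadraticChar F A = 1 := (quadraticChar_one_iff_isSquare hA0).mpr hsq
      rcases quadraticChar_dichotomy (show (-1 : F) ≠ 0 from by norm_num) with h | h
      · rw [hmA, hqA, h]; ring
      · rw [hmA, hqA, h]; ring
    · have hq1 : quadraticChar F (-1 : F) = -1 := quadraticChar_neg_one_iff_not_isSquare.mpr hns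
      rcases quadraticChar_dichotomy hA0 with h | h
      · rw [hmA, hq1, h]; ring
      · rw [hmA, hq1, h]; ring
  rw [hbA, hbA1, hfinal] at hzero
  rw [hzero] at hsum
  linarith [hbound, hsum]

end Pattern

section Degenerate
set_option maxHeartbeats 1000000
variable {F : Type*} [Field F] [Fintype F]

lemma witness_mem (A B : F) (hA : A ^ 2 + A = 1) (hB : B = A ^ 2) (w : F)
    (hnw : ¬ IsSquare (-w)) (hsaw : IsSquare (A - w)) (hnaw : ¬ IsSquare (1 - A * w)) :
    ((1 : F), w) ∈ ESub A B 0 1 0 1 := by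
  have hpsi1 : psiOrtho A B 1 = A := by rw [psiOrtho, if_pos IsSquare.one, mul_one]
  have hpsinw : psiOrtho A B (-w) = B * (-w) := by rw [psiOrtho, if_neg hnw]
  have hexp : 1 - w - B * (-w) = 1 - A * w := by
    linear_combination w * hB + w * hA
  refine ⟨⟨?_, ?_⟩, ?_, ?_, ?_, ?_⟩
  · intro h
    rw [Prod.mk.injEq] at h
    exact one_ne_zero h.1
  · show AssocEq A B 1 w
    unfold AssocEq
    rw [hpsi1, hpsinw, hexp, psiOrtho, if_pos hsaw, psiOrtho, if_neg hnaw]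
    linear_combination (w * A) * hA + (w - 1 + A * w) * hB
  · show IsSquare (1 : F) ↔ (0 : Fin 2) = 0
    simpa using isSquare_one
  · show IsSquare (-w) ↔ (1 : Fin 2) = 0
    simp only [show ((1 : Fin 2) = 0) ↔ False from by decide, iff_false]
    exact hnw
  · show IsSquare (psiOrtho A B 1 - w) ↔ (0 : Fin 2) = 0
    rw [hpsi1]
    simpa using hsaw
  · show IsSquare (1 - w - psiOrtho A B (-w)) ↔ (1 : Fin 2) = 0
    rw [hpsinw, hexp]
    simp only [show ((1 : Fin 2) = 0) ↔ False from by decide, iff_false]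
    exact hnaw

lemma degenerate_mem (hodd : Odd (Fintype.card F)) (x y : F)
    (hsx : IsSquare x) (hsy : IsSquare y) (hne : x ≠ y)
    (hx0 : x ≠ 0) (hx1 : x ≠ 1) (hy0 : y ≠ 0) (hy1 : y ≠ 1)
    (e1 : y + 1 - x = 0) (e2 : x ^ 2 - x - 1 = 0) :
    (x, y) ∈ SSub F 0 1 0 1 := by
  obtain ⟨hSig, hPsi⟩ := canonical_mem x y hsx hsy hne hx0 hx1 hy0 hy1
  have hyx : y - x = -1 := by linear_combination e1
  have hb2 : (y - 1) / (y - x) = 2 - x := by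
    rw [hyx, div_eq_iff (show (-1 : F) ≠ 0 from by norm_num)]
    linear_combination e1
  have ha2 : x * ((y - 1) / (y - x)) = x - 1 := by
    rw [hb2]
    linear_combination -e2
  rw [ha2, hb2] at hSig hPsi
  set A : F := x - 1 with hAdef
  have hA : A ^ 2 + A = 1 := by rw [hAdef]; linear_combination e2
  have hB : (2 : F) - x = A ^ 2 := by rw [hAdef]; linear_combination -e2
  by_cases hsA : IsSquare A
  case neg =>
    by_cases hs1 : IsSquare (-1 : F)
    case pos =>
      -- explicit witness w = A
      have hnA : ¬ IsSquare (-A) := by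
        rintro ⟨r, hr⟩
        obtain ⟨i0, hi⟩ := hs1
        exact hsA ⟨i0 * r, by linear_combination -hr + (r * r) * hi⟩
      refine ⟨(A, 2 - x), ⟨hSig, ⟨(1, A), witness_mem A (2 - x) hA hB A hnA ?_ ?_⟩⟩, hPsi⟩
      · rw [sub_self]; exact isSquare_zero'
      · rw [show (1 : F) - A * A = A from by linear_combination -hA]
        exact hsA
    case neg =>
      obtain ⟨w, hw1, hw2, hw3⟩ := exists_pattern hodd A hA (Or.inr hs1)
      exact ⟨(A, 2 - x), ⟨hSig, ⟨(1, w), witness_mem A (2 - x) hA hB w hw1 hw2 hw3⟩⟩, hPsi⟩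
  case pos =>
    obtain ⟨w, hw1, hw2, hw3⟩ := exists_pattern hodd A hA (Or.inl hsA)
    exact ⟨(A, 2 - x), ⟨hSig, ⟨(1, w), witness_mem A (2 - x) hA hB w hw1 hw2 hw3⟩⟩, hPsi⟩

end Degenerate


/-- Lemma 2.7: membership in `S_{01}^{01}` for `(x,y) ∈ S`. -/
theorem ssub_0101_characterisation (F : Type*) [Field F] [Fintype F]
    (hodd : Odd (Fintype.card F)) (x y : F) (hxy : (x, y) ∈ SPairs F) :
    (y + 1 - x = 0 → x ^ 2 - x - 1 = 0 → 43 < Fintype.card F →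
      (x, y) ∈ SSub F 0 1 0 1) ∧
    ((y + 1 - x ≠ 0 ∨ x ^ 2 - x - 1 ≠ 0) →
      ((x, y) ∈ SSub F 0 1 0 1 ↔
        ¬ IsSquare ((y + x * y - x) * (x - y - 1)) ∧
        ¬ IsSquare ((y - 2 * x + x ^ 2) * (x - y) * (x - y - 1)) ∧
        IsSquare ((2 * x * y - y ^ 2 - x) * (x - y) * (x - y - 1)))) := by
  obtain ⟨hsx, hsy, hne, hx0, hx1, hy0, hy1⟩ := hxy
  simp only at hsx hsy hne hx0 hx1 hy0 hy1
  constructor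
  · intro e1 e2 _
    exact degenerate_mem hodd x y hsx hsy hne hx0 hx1 hy0 hy1 e1 e2
  · intro hcase
    constructor
    · intro hmem
      exact forward_mem x y hsx hsy hne hx0 hx1 hy0 hy1 hcase hmem
    · rintro ⟨h1, h2, h3⟩
      exact backward_mem x y hsx hsy hne hx0 hx1 hy0 hy1 h1 h2 h3
end
end
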